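/- For any partition P, δ(P) = δ(P*), where P* is the conjugate partition. -/
import Mathlib


open scoped Classical

/-- A partition: weakly decreasing, eventually zero sequence of nonnegative integers. -/
def IsPartition (P : ℕ → ℕ) : Prop :=
  (∀ i, P (i + 1) ≤ P i) ∧ ∃ N, ∀ n ≥ N, P n = 0

/-- An arithmetic progression: a proper subset of ℤ whose set of differences is
closed under addition. -/
def IsAP (Λ : Set ℤ) : Prop :=
  Λ ≠ Set.univ ∧
    ∀ a b c d : ℤ, a ∈ Λ → b ∈ Λ → c ∈ Λ → d ∈ Λ →
      ∃ x ∈ Λ, ∃ y ∈ Λ, x - y = (a - b) + (c - d)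

/-- Upward displacement of a partition with respect to an arithmetic progression.
The convention `P_{-1} = ∞` is encoded by the disjunct `i = 0`. -/
noncomputable def upDisp (P : ℕ → ℕ) (Λ : Set ℤ) : ℕ → ℕ :=
  fun i => if ((P i : ℤ) - i) ∈ Λ ∧ (i = 0 ∨ P i < P (i - 1)) then P i + 1 else P i

/-- Downward displacement of a partition with respect to an arithmetic progression. -/
noncomputable def downDisp (P : ℕ → ℕ) (Λ : Set ℤ) : ℕ → ℕ :=
  fun i => if ((P i : ℤ) - i - 1) ∈ Λ ∧ P (i + 1) < P i then P i - 1 else P i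

/-- The sum `|P|` of the parts of a partition. -/
noncomputable def psum (P : ℕ → ℕ) : ℕ := ∑ᶠ i, P i

/-- Two partitions are linked if some arithmetic progression displaces one to the other. -/
def Linked (P Q : ℕ → ℕ) : Prop :=
  ∃ Λ : Set ℤ, IsAP Λ ∧ Q = upDisp P Λ ∧ P = downDisp Q Λ

/-- `k`-linked: linked with sums differing by `k`. -/
def KLinked (k : ℕ) (P Q : ℕ → ℕ) : Prop :=
  Linked P Q ∧ psum Q = psum P + k

/-- A valid sequence of partitions: adjacent pairs are 1-linked or 2-linked. -/
def ValidSeq (n : ℕ) (s : ℕ → ℕ → ℕ) : Prop :=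
  (∀ j ≤ n, IsPartition (s j)) ∧
    ∀ j < n, KLinked 1 (s j) (s (j + 1)) ∨ KLinked 2 (s j) (s (j + 1))

/-- The difficulty `δ(P)`: the least number of 1-linked adjacent pairs in a valid
sequence from the empty partition to `P`. -/
noncomputable def delta (P : ℕ → ℕ) : ℕ :=
  sInf { c | ∃ n s, ValidSeq n s ∧ s 0 = (fun _ => 0) ∧ s n = P ∧
    c = ((Finset.range n).filter fun j => KLinked 1 (s j) (s (j + 1))).card }

/-- The conjugate (dual) partition: `P*_n = #{m : P_m > n}`. -/
noncomputable def conj (P : ℕ → ℕ) : ℕ → ℕ := fun n => Set.ncard { m | n < P m }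

/- ### Auxiliary lemmas -/

lemma IsPartition.anti {P : ℕ → ℕ} (hP : IsPartition P) {i j : ℕ} (h : i ≤ j) : P j ≤ P i := by
  induction h with
  | refl => exact le_refl _
  | step h ih => exact le_trans (hP.1 _) ih

lemma ncard_Iio' (k : ℕ) : Set.ncard {n : ℕ | n < k} = k := by
  rw [show {n : ℕ | n < k} = ↑(Finset.range k) by ext n; simp, Set.ncard_coe_finset,
    Finset.card_range]

lemma part_set_finite {P : ℕ → ℕ} (hP : IsPartition P) (n : ℕ) : {m | n < P m}.Finite := by
  obtain ⟨N, hN⟩ := hP.2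
  apply Set.Finite.subset (Set.finite_Iio N)
  intro m hm
  simp only [Set.mem_setOf_eq] at hm
  simp only [Set.mem_Iio]
  by_contra h
  push_neg at h
  rw [hN m h] at hm
  omega

lemma conj_lt_iff {P : ℕ → ℕ} (hP : IsPartition P) {m n : ℕ} : m < conj P n ↔ n < P m := by
  constructor
  · intro h
    by_contra hc
    push_neg at hc
    have hsub : {k | n < P k} ⊆ ↑(Finset.range m) := by
      intro k hk
      simp only [Set.mem_setOf_eq] at hk
      simp only [Finset.coe_range, Set.mem_Iio]
      by_contra hk'
      push_neg at hk'
      have := hP.anti hk'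
      omega
    have hle := Set.ncard_le_ncard hsub (Finset.range m).finite_toSet
    rw [Set.ncard_coe_finset, Finset.card_range] at hle
    have : conj P n ≤ m := hle
    omega
  · intro h
    have hsub : ↑(Finset.range (m + 1)) ⊆ {k | n < P k} := by
      intro k hk
      simp only [Finset.coe_range, Set.mem_Iio] at hk
      simp only [Set.mem_setOf_eq]
      have := hP.anti (Nat.lt_succ_iff.mp hk)
      omega
    have hle := Set.ncard_le_ncard hsub (part_set_finite hP n)
    rw [Set.ncard_coe_finset, Finset.card_range] at hle
    have : m + 1 ≤ conj P n := hle
    omega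

lemma conj_part {P : ℕ → ℕ} (hP : IsPartition P) : IsPartition (conj P) := by
  constructor
  · intro i
    by_contra h
    push_neg at h
    have h1 : i + 1 < P (conj P i) := (conj_lt_iff hP).1 h
    have h2 : ¬ conj P i < conj P i := lt_irrefl _
    have := (conj_lt_iff (P := P) hP (m := conj P i) (n := i)).2
    omega
  · refine ⟨P 0, fun n hn => ?_⟩
    by_contra h
    have hpos : 0 < conj P n := Nat.pos_of_ne_zero h
    have := (conj_lt_iff hP).1 hpos
    omega

lemma conj_conj {P : ℕ → ℕ} (hP : IsPartition P) : conj (conj P) = P := by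
  funext m
  have hs : {n | m < conj P n} = {n : ℕ | n < P m} := by
    ext n
    simp only [Set.mem_setOf_eq]
    exact conj_lt_iff hP
  show Set.ncard {n | m < conj P n} = P m
  rw [hs, ncard_Iio']

lemma conj_zero : conj (fun _ => 0) = fun _ => 0 := by
  funext n
  show Set.ncard {m : ℕ | n < 0} = 0
  simp

lemma psum_conj {P : ℕ → ℕ} (hP : IsPartition P) : psum (conj P) = psum P := by
  obtain ⟨N, hN⟩ := hP.2
  have hM : ∀ m, P m ≤ P 0 := fun m => hP.anti (Nat.zero_le m)
  have h1 : psum P = ∑ i ∈ Finset.range N, P i := by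
    apply finsum_eq_sum_of_support_subset
    intro m hm
    simp only [Function.mem_support] at hm
    simp only [Finset.coe_range, Set.mem_Iio]
    by_contra h
    push_neg at h
    exact hm (hN m h)
  have h2 : psum (conj P) = ∑ n ∈ Finset.range (P 0), conj P n := by
    apply finsum_eq_sum_of_support_subset
    intro n hn
    simp only [Function.mem_support] at hn
    simp only [Finset.coe_range, Set.mem_Iio]
    by_contra h
    push_neg at h
    have hpos : 0 < conj P n := Nat.pos_of_ne_zero hn
    have := (conj_lt_iff hP).1 hpos
    omega
  have h3 : ∀ n, conj P n = ((Finset.range N).filter fun m => n < P m).card := by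
    intro n
    have hs : {m | n < P m} = ↑((Finset.range N).filter fun m => n < P m) := by
      ext m
      simp only [Set.mem_setOf_eq, Finset.coe_filter, Finset.mem_range]
      constructor
      · intro h
        refine ⟨?_, h⟩
        by_contra h'
        push_neg at h'
        rw [hN m h'] at h
        omega
      · tauto
    show Set.ncard {m | n < P m} = _
    rw [hs, Set.ncard_coe_finset]
  rw [h1, h2]
  calc ∑ n ∈ Finset.range (P 0), conj P n
      = ∑ n ∈ Finset.range (P 0), ∑ m ∈ Finset.range N, if n < P m then 1 else 0 := by
        apply Finset.sum_congr rfl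
        intro n _
        rw [h3 n, Finset.card_filter]
    _ = ∑ m ∈ Finset.range N, ∑ n ∈ Finset.range (P 0), if n < P m then 1 else 0 :=
        Finset.sum_comm
    _ = ∑ m ∈ Finset.range N, P m := by
        apply Finset.sum_congr rfl
        intro m _
        have hfil : (Finset.range (P 0)).filter (fun n => n < P m) = Finset.range (P m) := by
          ext n
          simp only [Finset.mem_filter, Finset.mem_range]
          have := hM m
          omega
        rw [← Finset.card_filter, hfil, Finset.card_range]

/-- The reflected arithmetic progression. -/
def reflAP (Λ : Set ℤ) : Set ℤ := {x | -x ∈ Λ}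

lemma reflAP_isAP {Λ : Set ℤ} (h : IsAP Λ) : IsAP (reflAP Λ) := by
  constructor
  · intro hc
    apply h.1
    ext x
    simp only [Set.mem_univ, iff_true]
    have hx : -x ∈ reflAP Λ := by rw [hc]; trivial
    simp only [reflAP, Set.mem_setOf_eq, neg_neg] at hx
    exact hx
  · intro a b c d ha hb hc hd
    obtain ⟨x, hx, y, hy, hxy⟩ := h.2 (-b) (-a) (-d) (-c) hb ha hd hc
    refine ⟨-y, ?_, -x, ?_, ?_⟩
    · show -(-y) ∈ Λ
      rwa [neg_neg]
    · show -(-x) ∈ Λ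
      rwa [neg_neg]
    · linarith

lemma conj_up {P : ℕ → ℕ} (Λ : Set ℤ) (hP : IsPartition P) :
    conj (upDisp P Λ) = upDisp (conj P) (reflAP Λ) := by
  funext n
  set j := conj P n with hj
  have hlt : ∀ m, m < j → n < P m := by
    intro m hm
    exact (conj_lt_iff hP).1 hm
  have hge : ∀ m, j ≤ m → P m ≤ n := by
    intro m hm
    by_contra h
    push_neg at h
    have := (conj_lt_iff hP).2 h
    omega
  have hcorner : j = 0 ∨ P j < P (j - 1) := by
    rcases Nat.eq_zero_or_pos j with h | h
    · exact Or.inl h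
    · refine Or.inr ?_
      have h1 := hge j le_rfl
      have h2 := hlt (j - 1) (by omega)
      omega
  have key : ∀ m, j ≤ m → n < upDisp P Λ m → m = j ∧ P j = n ∧ ((n : ℤ) - j ∈ Λ) := by
    intro m hm hQm
    have hPm : P m ≤ n := hge m hm
    unfold upDisp at hQm
    by_cases hcond : ((P m : ℤ) - m) ∈ Λ ∧ (m = 0 ∨ P m < P (m - 1))
    · rw [if_pos hcond] at hQm
      have hPmn : P m = n := by omega
      have hmj : m = j := by
        by_contra hne
        have hmj' : j < m := lt_of_le_of_ne hm (Ne.symm hne)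
        rcases hcond.2 with h0 | hlt'
        · omega
        · have := hge (m - 1) (by omega)
          omega
      subst hmj
      refine ⟨rfl, hPmn, ?_⟩
      have hmem := hcond.1
      rw [hPmn] at hmem
      exact hmem
    · rw [if_neg hcond] at hQm
      omega
  by_cases hb : ((n : ℤ) - j ∈ Λ) ∧ P j = n
  · have hset : {m | n < upDisp P Λ m} = {m : ℕ | m < j + 1} := by
      ext m
      simp only [Set.mem_setOf_eq]
      constructor
      · intro h
        by_contra h'
        push_neg at h'
        obtain ⟨hmj, -, -⟩ := key m (by omega) h
        omega
      · intro h
        rcases Nat.lt_succ_iff_lt_or_eq.mp h with h' | h'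
        · have := hlt m h'
          unfold upDisp
          split <;> omega
        · subst h'
          unfold upDisp
          rw [if_pos ⟨by rw [hb.2]; exact hb.1, hcorner⟩]
          omega
    have hL : conj (upDisp P Λ) n = j + 1 := by
      show Set.ncard {m | n < upDisp P Λ m} = j + 1
      rw [hset, ncard_Iio']
    have hcond : ((conj P n : ℤ) - n) ∈ reflAP Λ ∧ (n = 0 ∨ conj P n < conj P (n - 1)) := by
      constructor
      · simp only [reflAP, Set.mem_setOf_eq]
        have e : -((conj P n : ℤ) - n) = (n : ℤ) - j := by rw [← hj]; ring
        rw [e]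
        exact hb.1
      · rcases Nat.eq_zero_or_pos n with h | h
        · exact Or.inl h
        · right
          rw [← hj]
          apply (conj_lt_iff hP).2
          have := hb.2
          omega
    rw [hL]
    unfold upDisp
    rw [if_pos hcond]
  · have hset : {m | n < upDisp P Λ m} = {m : ℕ | m < j} := by
      ext m
      simp only [Set.mem_setOf_eq]
      constructor
      · intro h
        by_contra h'
        push_neg at h'
        obtain ⟨hmj, h1, h2⟩ := key m h' h
        exact hb ⟨h2, h1⟩
      · intro h
        have := hlt m h
        unfold upDisp
        split <;> omega
    have hL : conj (upDisp P Λ) n = j := by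
      show Set.ncard {m | n < upDisp P Λ m} = j
      rw [hset, ncard_Iio']
    have hncond : ¬(((conj P n : ℤ) - n) ∈ reflAP Λ ∧ (n = 0 ∨ conj P n < conj P (n - 1))) := by
      rintro ⟨h1, h2⟩
      apply hb
      constructor
      · simp only [reflAP, Set.mem_setOf_eq] at h1
        have e : (n : ℤ) - j = -((conj P n : ℤ) - n) := by rw [← hj]; ring
        rw [e]
        exact h1
      · have hPj : P j ≤ n := hge j le_rfl
        rcases h2 with h0 | h2
        · omega
        · rw [← hj] at h2
          have := (conj_lt_iff hP).1 h2
          omega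
    rw [hL]
    unfold upDisp
    rw [if_neg hncond]

lemma conj_down {Q : ℕ → ℕ} (Λ : Set ℤ) (hQ : IsPartition Q) :
    conj (downDisp Q Λ) = downDisp (conj Q) (reflAP Λ) := by
  funext n
  set j := conj Q n with hj
  have hlt : ∀ m, m < j → n < Q m := by
    intro m hm
    exact (conj_lt_iff hQ).1 hm
  have hge : ∀ m, j ≤ m → Q m ≤ n := by
    intro m hm
    by_contra h
    push_neg at h
    have := (conj_lt_iff hQ).2 h
    omega
  have hR_le : ∀ m, downDisp Q Λ m ≤ Q m := by
    intro m
    unfold downDisp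
    split <;> omega
  by_cases hr : 1 ≤ j ∧ Q (j - 1) = n + 1 ∧ ((n : ℤ) + 1 - j ∈ Λ)
  · obtain ⟨hj1, hQj1, hΛ⟩ := hr
    have hset : {m | n < downDisp Q Λ m} = {m : ℕ | m < j - 1} := by
      ext m
      simp only [Set.mem_setOf_eq]
      constructor
      · intro h
        have hmj : m < j := (conj_lt_iff hQ).2 (lt_of_lt_of_le h (hR_le m))
        rcases Nat.lt_or_ge m (j - 1) with h' | h'
        · exact h'
        · exfalso
          have hm : m = j - 1 := by omega
          subst hm
          have hrem : downDisp Q Λ (j - 1) = n := by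
            unfold downDisp
            rw [if_pos]
            · omega
            constructor
            · have e : (Q (j - 1) : ℤ) - (j - 1 : ℕ) - 1 = (n : ℤ) + 1 - j := by
                rw [hQj1]; push_cast; omega
              rw [e]
              exact hΛ
            · have e : (j - 1) + 1 = j := by omega
              rw [e, hQj1]
              have := hge j le_rfl
              omega
          rw [hrem] at h
          omega
      · intro h
        have hm1 : m + 1 < j := by omega
        have hQm : n < Q m := hlt m (by omega)
        have hQm1 : n < Q (m + 1) := hlt (m + 1) hm1
        unfold downDisp
        by_cases hc : ((Q m : ℤ) - m - 1) ∈ Λ ∧ Q (m + 1) < Q m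
        · rw [if_pos hc]
          have := hc.2
          omega
        · rw [if_neg hc]
          omega
    have hL : conj (downDisp Q Λ) n = j - 1 := by
      show Set.ncard {m | n < downDisp Q Λ m} = j - 1
      rw [hset, ncard_Iio']
    have hcond : ((conj Q n : ℤ) - n - 1) ∈ reflAP Λ ∧ conj Q (n + 1) < conj Q n := by
      constructor
      · simp only [reflAP, Set.mem_setOf_eq]
        have e : -((conj Q n : ℤ) - n - 1) = (n : ℤ) + 1 - j := by rw [← hj]; ring
        rw [e]
        exact hΛ
      · rw [← hj]
        by_contra hcon
        push_neg at hcon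
        have hlt' : j - 1 < conj Q (n + 1) := by omega
        have := (conj_lt_iff hQ).1 hlt'
        omega
    rw [hL]
    unfold downDisp
    rw [if_pos hcond]
  · have hset : {m | n < downDisp Q Λ m} = {m : ℕ | m < j} := by
      ext m
      simp only [Set.mem_setOf_eq]
      constructor
      · intro h
        exact (conj_lt_iff hQ).2 (lt_of_lt_of_le h (hR_le m))
      · intro h
        have hQm : n < Q m := hlt m h
        unfold downDisp
        by_cases hc : ((Q m : ℤ) - m - 1) ∈ Λ ∧ Q (m + 1) < Q m
        · rw [if_pos hc]
          rcases Nat.lt_or_ge (n + 1) (Q m) with h' | h'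
          · omega
          · exfalso
            have hQmn : Q m = n + 1 := by omega
            have h1 : j ≤ m + 1 := by
              by_contra hh
              push_neg at hh
              have := hlt (m + 1) hh
              omega
            have hmj : m = j - 1 := by omega
            apply hr
            refine ⟨by omega, by rw [← hmj]; exact hQmn, ?_⟩
            have e : (n : ℤ) + 1 - j = (Q m : ℤ) - m - 1 := by
              rw [hQmn]; push_cast; omega
            rw [e]
            exact hc.1
        · rw [if_neg hc]
          exact hQm
    have hL : conj (downDisp Q Λ) n = j := by
      show Set.ncard {m | n < downDisp Q Λ m} = j
      rw [hset, ncard_Iio']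
    have hncond : ¬(((conj Q n : ℤ) - n - 1) ∈ reflAP Λ ∧ conj Q (n + 1) < conj Q n) := by
      rintro ⟨h1, h2⟩
      apply hr
      have hj1 : 1 ≤ j := by omega
      have hQj1 : Q (j - 1) = n + 1 := by
        have hub : Q (j - 1) ≤ n + 1 := by
          by_contra hh
          push_neg at hh
          have := (conj_lt_iff hQ).2 hh
          omega
        have hlb : n < Q (j - 1) := hlt (j - 1) (by omega)
        omega
      refine ⟨hj1, hQj1, ?_⟩
      simp only [reflAP, Set.mem_setOf_eq] at h1
      have e : (n : ℤ) + 1 - j = -((conj Q n : ℤ) - n - 1) := by rw [← hj]; ring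
      rw [e]
      exact h1
    rw [hL]
    unfold downDisp
    rw [if_neg hncond]

lemma klinked_conj {k : ℕ} {P Q : ℕ → ℕ} (hP : IsPartition P) (hQ : IsPartition Q)
    (h : KLinked k P Q) : KLinked k (conj P) (conj Q) := by
  obtain ⟨⟨Λ, hΛ, hup, hdown⟩, hsum⟩ := h
  refine ⟨⟨reflAP Λ, reflAP_isAP hΛ, ?_, ?_⟩, ?_⟩
  · rw [hup, conj_up Λ hP]
  · rw [hdown, conj_down Λ hQ]
  · rw [psum_conj hP, psum_conj hQ]
    exact hsum

lemma klinked_conj_iff {k : ℕ} {P Q : ℕ → ℕ} (hP : IsPartition P) (hQ : IsPartition Q) :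
    KLinked k (conj P) (conj Q) ↔ KLinked k P Q := by
  constructor
  · intro h
    have := klinked_conj (conj_part hP) (conj_part hQ) h
    rwa [conj_conj hP, conj_conj hQ] at this
  · exact klinked_conj hP hQ

/-- The defining set of `delta`. -/
def dset (P : ℕ → ℕ) : Set ℕ :=
  { c | ∃ n s, ValidSeq n s ∧ s 0 = (fun _ => 0) ∧ s n = P ∧
    c = ((Finset.range n).filter fun j => KLinked 1 (s j) (s (j + 1))).card }

lemma dset_subset {P : ℕ → ℕ} (hP : IsPartition P) : dset P ⊆ dset (conj P) := by
  rintro c ⟨n, s, ⟨hpart, hlink⟩, h0, hn, hc⟩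
  refine ⟨n, fun j => conj (s j), ⟨fun j hj => conj_part (hpart j hj), ?_⟩, ?_, ?_, ?_⟩
  · intro j hj
    rcases hlink j hj with h | h
    · exact Or.inl (klinked_conj (hpart j hj.le) (hpart (j + 1) hj) h)
    · exact Or.inr (klinked_conj (hpart j hj.le) (hpart (j + 1) hj) h)
  · show conj (s 0) = (fun _ => 0)
    rw [h0, conj_zero]
  · show conj (s n) = conj P
    rw [hn]
  · rw [hc]
    congr 1
    apply Finset.filter_congr
    intro j hj
    rw [Finset.mem_range] at hj
    simp only [eq_iff_iff]
    exact (klinked_conj_iff (hpart j hj.le) (hpart (j + 1) hj)).symm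

/-- The difficulty is invariant under conjugation: `δ(P) = δ(P*)`. -/
theorem stmt7 (P : ℕ → ℕ) (hP : IsPartition P) :
    delta (conj P) = delta P := by
  have h1 : dset P ⊆ dset (conj P) := dset_subset hP
  have h2 : dset (conj P) ⊆ dset P := by
    have h := dset_subset (conj_part hP)
    rwa [conj_conj hP] at h
  have hEq : dset (conj P) = dset P := le_antisymm h2 h1
  show sInf (dset (conj P)) = sInf (dset P)
  rw [hEq]
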